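/- arXiv:2410.14362 — 4 statements merged into one kernel-verified Lean document; each statement's English description precedes it below -/
import Mathlib

section
/- Let α ∈ (1/2, 1), let x ∈ ℝ, and set ζ = (α − 1)(exp(x) + exp(−x)) and z₂ = (ζ − sqrt(ζ² − 4(1 − 2α))) / (2(1 − 2α)). Then z₂ > 0, and for every a > 0 the following are equivalent: (i) 1 − α/(exp(x − a) + 1) ≥ α/(exp(−x − a) + 1); (ii) (1 − 2α)·exp(2a) + (1 − α)(exp(x) + exp(−x))·exp(a) + 1 ≥ 0; (iii) exp(a) ≤ z₂. -/
open Real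

set_option maxHeartbeats 1000000

theorem peace_threshold_equivalences (α x : ℝ) (hα : α ∈ Set.Ioo (1/2 : ℝ) 1) :
    (((α - 1) * (Real.exp x + Real.exp (-x)) -
        Real.sqrt (((α - 1) * (Real.exp x + Real.exp (-x)))^2 - 4 * (1 - 2*α))) /
        (2 * (1 - 2*α)) > 0) ∧
    ∀ a : ℝ, a > 0 →
      ((1 - α / (Real.exp (x - a) + 1) ≥ α / (Real.exp (-x - a) + 1) ↔
        (1 - 2*α) * Real.exp (2*a) + (1 - α) * (Real.exp x + Real.exp (-x)) * Real.exp a + 1 ≥ 0) ∧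
      ((1 - 2*α) * Real.exp (2*a) + (1 - α) * (Real.exp x + Real.exp (-x)) * Real.exp a + 1 ≥ 0 ↔
        Real.exp a ≤ ((α - 1) * (Real.exp x + Real.exp (-x)) -
          Real.sqrt (((α - 1) * (Real.exp x + Real.exp (-x)))^2 - 4 * (1 - 2*α))) /
          (2 * (1 - 2*α)))) := by
  obtain ⟨hα1, hα2⟩ := hα
  set T := Real.exp x + Real.exp (-x) with hT
  have hTpos : 0 < T := by positivity
  have hkpos : 0 < 2*α - 1 := by linarith
  set b := (1 - α) * T with hb
  have hbpos : 0 < b := mul_pos (by linarith) hTpos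
  set s := Real.sqrt (((α - 1) * T)^2 - 4 * (1 - 2*α)) with hs
  clear_value T b s
  have hs2 : s^2 = b^2 + 4*(2*α - 1) := by
    rw [hs, Real.sq_sqrt (by nlinarith : (0:ℝ) ≤ ((α - 1) * T)^2 - 4 * (1 - 2*α))]
    rw [hb]; ring
  have hsnn : 0 ≤ s := hs ▸ Real.sqrt_nonneg _
  have hsb : b < s := by nlinarith
  have hne1 : (2 * (1 - 2*α)) ≠ 0 := by intro h; linarith [h]
  have hne2 : (2 * (2*α - 1)) ≠ 0 := by positivity
  have hz2 : ((α - 1) * T - s) / (2 * (1 - 2*α)) = (b + s) / (2 * (2*α - 1)) := by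
    rw [div_eq_div_iff hne1 hne2, hb]; ring
  constructor
  · rw [hz2]
    exact div_pos (by linarith) (by linarith)
  · intro a ha
    have hE : 0 < Real.exp a := Real.exp_pos a
    have hu : Real.exp (x - a) = Real.exp x / Real.exp a := Real.exp_sub x a
    have hv : Real.exp (-x - a) = Real.exp (-x) / Real.exp a := Real.exp_sub (-x) a
    have h2a : Real.exp (2*a) = Real.exp a ^ 2 := by
      rw [two_mul, Real.exp_add]; ring
    have hu1 : 0 < Real.exp (x - a) + 1 := by positivity
    have hv1 : 0 < Real.exp (-x - a) + 1 := by positivity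
    have hQpos : 0 < (Real.exp (x - a) + 1) * (Real.exp (-x - a) + 1) * Real.exp a ^ 2 := by
      positivity
    have key : (1 - α / (Real.exp (x - a) + 1) - α / (Real.exp (-x - a) + 1)) *
        ((Real.exp (x - a) + 1) * (Real.exp (-x - a) + 1) * Real.exp a ^ 2)
        = (1 - 2*α) * Real.exp (2*a) + b * Real.exp a + 1 := by
      rw [hu, hv, h2a, hb, hT, Real.exp_neg]
      have hx0 : Real.exp x ≠ 0 := (Real.exp_pos x).ne'
      have hE0 : Real.exp a ≠ 0 := hE.ne'
      have hu1' : Real.exp x / Real.exp a + 1 ≠ 0 := by positivity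
      have hv1' : (Real.exp x)⁻¹ / Real.exp a + 1 ≠ 0 := by positivity
      field_simp
      ring
    constructor
    · constructor
      · intro h
        have h0 : 0 ≤ 1 - α / (Real.exp (x - a) + 1) - α / (Real.exp (-x - a) + 1) := by
          linarith
        have := mul_nonneg h0 hQpos.le
        rw [key] at this; linarith
      · intro h
        have h0 : 0 ≤ 1 - α / (Real.exp (x - a) + 1) - α / (Real.exp (-x - a) + 1) := by
          by_contra hneg
          push_neg at hneg
          have := mul_neg_of_neg_of_pos hneg hQpos
          rw [key] at this; linarith
        linarith
    · rw [hz2, le_div_iff₀ (by linarith : (0:ℝ) < 2 * (2*α - 1)), h2a]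
      generalize Real.exp a = E at hE ⊢
      constructor
      · intro h
        by_contra hc
        push_neg at hc
        have h1 : 0 < E * (2 * (2*α - 1)) - b - s := by linarith
        have h2 : 0 < E * (2 * (2*α - 1)) - b + s := by linarith
        nlinarith [mul_pos h1 h2, hs2, mul_pos hkpos hE]
      · intro h
        have h1 : E * (2 * (2*α - 1)) - b - s ≤ 0 := by linarith
        have h2 : 0 ≤ E * (2 * (2*α - 1)) - b + s := by nlinarith [mul_pos hkpos hE]
        nlinarith [mul_nonpos_of_nonpos_of_nonneg h1 h2, hs2]
end

section
/- Let α ∈ (1/2, 1) and for x ∈ ℝ set ζ(x) = (α − 1)(exp(x) + exp(−x)) and z₂(x) = (ζ(x) − sqrt(ζ(x)² − 4(1 − 2α))) / (2(1 − 2α)). Then z₂ is strictly increasing in x on (0, ∞); equivalently, the critical threshold a_crit(x) = log z₂(x) is strictly increasing in |y_G − y_R| where x = y_G − y_R. -/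
open Real

theorem a_crit_increasing_in_gap (α : ℝ) (hα : α ∈ Set.Ioo (1/2 : ℝ) 1) :
    StrictMonoOn
      (fun x : ℝ =>
        ((α - 1) * (Real.exp x + Real.exp (-x)) -
          Real.sqrt (((α - 1) * (Real.exp x + Real.exp (-x)))^2 - 4 * (1 - 2*α))) /
          (2 * (1 - 2*α)))
      (Set.Ioi 0) := by
  obtain ⟨hα1, hα2⟩ := hα
  intro x hx y hy hxy
  simp only [Set.mem_Ioi] at hx hy
  set cx := Real.exp x + Real.exp (-x) with hcx
  set cy := Real.exp y + Real.exp (-y) with hcy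
  have hcxpos : 0 < cx := by positivity
  have hclt : cx < cy := by
    have h1 : Real.exp x < Real.exp y := Real.exp_lt_exp.mpr hxy
    have h2 : Real.exp (-(x+y)) < 1 := by
      rw [Real.exp_lt_one_iff]; linarith
    have h3 : Real.exp (-x) - Real.exp (-y) = Real.exp (-(x+y)) * (Real.exp y - Real.exp x) := by
      rw [mul_sub, ← Real.exp_add, ← Real.exp_add]; ring_nf
    nlinarith [Real.exp_pos y, Real.exp_pos x]
  have hd : 2 * (1 - 2*α) < 0 := by linarith
  rw [div_lt_div_right_of_neg hd]
  simp only [← hcx, ← hcy]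
  have hSlt : Real.sqrt (((α - 1) * cx)^2 - 4 * (1 - 2*α)) <
      Real.sqrt (((α - 1) * cy)^2 - 4 * (1 - 2*α)) := by
    apply Real.sqrt_lt_sqrt
    · nlinarith [sq_nonneg ((α-1)*cx)]
    · have h1 : 0 < (1-α)*(1-α) := by nlinarith
      have h2 : cx*cx < cy*cy := by nlinarith
      nlinarith [mul_lt_mul_of_pos_left h2 h1]
  have hαc : (α - 1) * cy < (α - 1) * cx := by nlinarith
  linarith
end

section
/- Let x ∈ ℝ be fixed, set s = exp(x) + exp(−x), and for α ∈ (1/2, 1) define z₂(α) = ((α − 1)s − sqrt((α − 1)²s² − 4(1 − 2α))) / (2(1 − 2α)). Then z₂ is strictly decreasing in α on (1/2, 1); equivalently, the critical threshold a_crit = log z₂ is strictly decreasing in α. -/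
open Real

theorem a_crit_decreasing_in_alpha (x : ℝ) :
    StrictAntiOn
      (fun α : ℝ =>
        ((α - 1) * (Real.exp x + Real.exp (-x)) -
          Real.sqrt ((α - 1)^2 * (Real.exp x + Real.exp (-x))^2 - 4 * (1 - 2*α))) /
          (2 * (1 - 2*α)))
      (Set.Ioo (1/2 : ℝ) 1) := by
  set s : ℝ := Real.exp x + Real.exp (-x) with hs
  have hs2 : 2 ≤ s := by
    have h1 := Real.add_one_le_exp x
    have h2 := Real.add_one_le_exp (-x)
    simp only [hs]; linarith
  have hs0 : 0 < s := by linarith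
  -- positivity of the discriminant
  have hD : ∀ α : ℝ, α ∈ Set.Ioo (1/2 : ℝ) 1 → 0 < (α - 1)^2 * s^2 - 4 * (1 - 2*α) := by
    intro α ⟨h1, h2⟩
    nlinarith [sq_nonneg ((α - 1) * s)]
  -- positivity of the conjugate denominator
  have hg : ∀ α : ℝ, α ∈ Set.Ioo (1/2 : ℝ) 1 →
      0 < (α - 1) * s + Real.sqrt ((α - 1)^2 * s^2 - 4 * (1 - 2*α)) := by
    intro α hα
    obtain ⟨h1, h2⟩ := hα
    set t := Real.sqrt ((α - 1)^2 * s^2 - 4 * (1 - 2*α)) with ht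
    have ht0 : 0 ≤ t := Real.sqrt_nonneg _
    have ht2 : t^2 = (α - 1)^2 * s^2 - 4 * (1 - 2*α) :=
      Real.sq_sqrt (le_of_lt (hD α ⟨h1, h2⟩))
    have hζ : (α - 1) * s < 0 := mul_neg_of_neg_of_pos (by linarith) hs0
    nlinarith [sq_nonneg (t + (α - 1) * s)]
  -- rewrite the function as 2 / g
  have hfeq : ∀ α : ℝ, α ∈ Set.Ioo (1/2 : ℝ) 1 →
      ((α - 1) * s - Real.sqrt ((α - 1)^2 * s^2 - 4 * (1 - 2*α))) / (2 * (1 - 2*α))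
        = 2 / ((α - 1) * s + Real.sqrt ((α - 1)^2 * s^2 - 4 * (1 - 2*α))) := by
    intro α hα
    obtain ⟨h1, h2⟩ := hα
    set t := Real.sqrt ((α - 1)^2 * s^2 - 4 * (1 - 2*α)) with ht
    have ht2 : t^2 = (α - 1)^2 * s^2 - 4 * (1 - 2*α) :=
      Real.sq_sqrt (le_of_lt (hD α ⟨h1, h2⟩))
    have hgα : 0 < (α - 1) * s + t := hg α ⟨h1, h2⟩
    have hd : (2 : ℝ) * (1 - 2*α) ≠ 0 := by
      intro h; nlinarith
    rw [div_eq_div_iff hd (ne_of_gt hgα)]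
    nlinarith [ht2]
  -- main monotonicity
  intro a ha b hb hab
  simp only
  rw [hfeq a ha, hfeq b hb]
  obtain ⟨ha1, ha2⟩ := ha
  obtain ⟨hb1, hb2⟩ := hb
  have hga := hg a ⟨ha1, ha2⟩
  have hgb := hg b ⟨hb1, hb2⟩
  have hglt : (a - 1) * s + Real.sqrt ((a - 1)^2 * s^2 - 4 * (1 - 2*a))
      < (b - 1) * s + Real.sqrt ((b - 1)^2 * s^2 - 4 * (1 - 2*b)) := by
    set tb := Real.sqrt ((b - 1)^2 * s^2 - 4 * (1 - 2*b)) with htb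
    have htb0 : 0 ≤ tb := Real.sqrt_nonneg _
    have htb2 : tb^2 = (b - 1)^2 * s^2 - 4 * (1 - 2*b) :=
      Real.sq_sqrt (le_of_lt (hD b ⟨hb1, hb2⟩))
    -- key inequality
    have K : 0 < s * tb + (b - 1) * s^2 + 4 := by
      by_cases h : 0 ≤ (b - 1) * s^2 + 4
      · have htbpos : 0 < tb := Real.sqrt_pos.mpr (hD b ⟨hb1, hb2⟩)
        nlinarith [mul_pos hs0 htbpos]
      · push_neg at h
        have hs4 : 4 < s^2 := by nlinarith
        have hA : 0 < (1 - b) * s^2 - 4 := by linarith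
        nlinarith [sq_nonneg (s * tb - ((1 - b) * s^2 - 4)), mul_nonneg (le_of_lt hs0) htb0]
    have hsqrtlt : Real.sqrt ((a - 1)^2 * s^2 - 4 * (1 - 2*a)) < (b - a) * s + tb := by
      have hy : 0 < (b - a) * s + tb := by
        have : 0 < (b - a) * s := mul_pos (by linarith) hs0
        linarith
      rw [Real.sqrt_lt' hy]
      nlinarith [mul_pos (show (0:ℝ) < b - a by linarith) K]
    linarith
  exact div_lt_div_of_pos_left (by norm_num) hga hglt
end

section
/- Let α ∈ (0, 1) and define g(β) = −α·log(1 − β) − α(1 − α)β/((1 − β)(1 − α − β)) for β ∈ (1 − α, 1). Then at every β ∈ (1 − α, 1) the derivative of g equals α·[(1 − β)(α + β − 1)² + (1 − α)(α + β² − 1)] / ((β − 1)²(α + β − 1)²), and this derivative is strictly positive whenever β > sqrt(1 − α). -/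
open Real

theorem payoff_at_stationary_deriv (α : ℝ) (hα : α ∈ Set.Ioo (0 : ℝ) 1) :
    ∀ β ∈ Set.Ioo (1 - α) (1 : ℝ),
      HasDerivAt
        (fun β : ℝ =>
          -α * Real.log (1 - β) - α * (1 - α) * β / ((1 - β) * (1 - α - β)))
        (α * ((1 - β) * (α + β - 1)^2 + (1 - α) * (α + β^2 - 1)) /
          ((β - 1)^2 * (α + β - 1)^2)) β ∧
      (β > Real.sqrt (1 - α) →
        α * ((1 - β) * (α + β - 1)^2 + (1 - α) * (α + β^2 - 1)) /
          ((β - 1)^2 * (α + β - 1)^2) > 0) := by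
  obtain ⟨hα0, hα1⟩ := hα
  intro β hβ
  obtain ⟨hβ1, hβ2⟩ := hβ
  have h1 : (0:ℝ) < 1 - β := by linarith
  have h2 : (0:ℝ) < α + β - 1 := by linarith
  have hd : ((1 - β) * (1 - α - β)) ≠ 0 := by
    have h3 : 1 - α - β < 0 := by linarith
    exact mul_ne_zero (ne_of_gt h1) (ne_of_lt h3)
  constructor
  · have h_inner : HasDerivAt (fun x : ℝ => 1 - x) (-1) β := by
      simpa using (hasDerivAt_id β).const_sub 1
    have hlog : HasDerivAt (fun x : ℝ => Real.log (1 - x)) ((1 - β)⁻¹ * (-1)) β :=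
      (Real.hasDerivAt_log h1.ne').comp β h_inner
    have hnum : HasDerivAt (fun x : ℝ => α * (1 - α) * x) (α * (1 - α)) β := by
      simpa using (hasDerivAt_id β).const_mul (α * (1 - α))
    have hden : HasDerivAt (fun x : ℝ => (1 - x) * (1 - α - x))
        ((-1) * (1 - α - β) + (1 - β) * (-1)) β := by
      have g : HasDerivAt (fun x : ℝ => 1 - α - x) (-1) β := by
        simpa using (hasDerivAt_id β).const_sub (1 - α)
      exact h_inner.mul g
    have H := (hlog.const_mul (-α)).sub (hnum.div hden hd)
    refine HasDerivAt.congr_deriv H ?_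
    have h3 : (1:ℝ) - α - β ≠ 0 := by intro h; linarith [h2]
    have e1 : (1:ℝ) - β ≠ 0 := h1.ne'
    have e3 : β - 1 ≠ 0 := by intro h; apply e1; linarith
    have e4 : α + β - 1 ≠ 0 := h2.ne'
    field_simp [e1, h3, e3, e4]
    ring
  · intro hβs
    have hge : (0:ℝ) ≤ 1 - α := by linarith
    have hsq : β ^ 2 > 1 - α := by
      have := Real.sq_sqrt hge
      nlinarith [Real.sqrt_nonneg (1 - α)]
    have hnumpos : (0:ℝ) < (1 - β) * (α + β - 1)^2 + (1 - α) * (α + β^2 - 1) := by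
      nlinarith [sq_nonneg (α + β - 1)]
    have hdenpos : (0:ℝ) < (β - 1)^2 * (α + β - 1)^2 := by
      have e : (β - 1)^2 = (1 - β)^2 := by ring
      rw [e]
      exact mul_pos (pow_pos h1 2) (pow_pos h2 2)
    exact div_pos (mul_pos hα0 hnumpos) hdenpos
end
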